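/- Let k ≥ 1 and n ≥ k be natural numbers. There exists a k-degenerate simple graph G on n vertices with exactly k·n − k(k+1)/2 edges and exactly C(k,3) + C(k,2)·(n−k) triangles; hence the bounds in Proposition 2 are attained (for instance by the graph consisting of a clique on k vertices together with n−k further vertices each adjacent to all k clique vertices). -/

import Mathlib

/-- A simple graph `G` is `k`-degenerate if every nonempty induced subgraph has a
vertex of degree at most `k`: for every nonempty finite set `S` of vertices there is
a vertex `v ∈ S` adjacent to at most `k` other vertices of `S`. -/
def IsKDegenerate {V : Type*} (k : ℕ) (G : SimpleGraph V) : Prop :=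
  ∀ S : Finset V, S.Nonempty → ∃ v ∈ S, {w ∈ (S : Set V) | G.Adj v w}.ncard ≤ k

/-- The number of triangles of a graph: the number of 3-element vertex sets that are
pairwise adjacent (3-cliques). -/
noncomputable def triangleCount {V : Type*} (G : SimpleGraph V) : ℕ :=
  {s : Finset V | G.IsNClique 3 s}.ncard

private def extGraph (n k : ℕ) : SimpleGraph (Fin n) where
  Adj u v := u ≠ v ∧ ((u : ℕ) < k ∨ (v : ℕ) < k)
  symm := ⟨fun u v h => ⟨h.1.symm, h.2.symm⟩⟩
  loopless := ⟨fun v h => h.1 rfl⟩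

instance (n k : ℕ) : DecidableRel (extGraph n k).Adj :=
  fun _ _ => instDecidableAnd

private lemma cardA {n k : ℕ} (hkn : k ≤ n) :
    (Finset.univ.filter fun v : Fin n => (v : ℕ) < k).card = k := by
  have := Finset.card_bij'
    (s := Finset.univ.filter fun v : Fin n => (v : ℕ) < k)
    (t := (Finset.univ : Finset (Fin k)))
    (fun v hv => ⟨(v : ℕ), (Finset.mem_filter.mp hv).2⟩)
    (fun w _ => ⟨(w : ℕ), lt_of_lt_of_le w.isLt hkn⟩)
    (fun v hv => Finset.mem_univ _)
    (fun w _ => Finset.mem_filter.mpr ⟨Finset.mem_univ _, w.isLt⟩)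
    (fun v hv => rfl) (fun w hw => rfl)
  simpa using this

private lemma cardB {n k : ℕ} (hkn : k ≤ n) :
    (Finset.univ.filter fun v : Fin n => ¬ (v : ℕ) < k).card = n - k := by
  have h := Finset.card_filter_add_card_filter_not
    (s := (Finset.univ : Finset (Fin n))) (p := fun v : Fin n => (v : ℕ) < k)
  rw [cardA hkn] at h
  simp only [Finset.card_univ, Fintype.card_fin] at h
  omega

private lemma extDegen {n k : ℕ} (hkn : k ≤ n) : IsKDegenerate k (extGraph n k) := by
  intro S hS
  set v := S.max' hS with hv
  refine ⟨v, S.max'_mem hS, ?_⟩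
  have hset : {w ∈ (S : Set (Fin n)) | (extGraph n k).Adj v w}
      = ↑(S.filter fun w => (extGraph n k).Adj v w) := by
    ext w; simp
  rw [hset, Set.ncard_coe_finset]
  by_cases hvk : (v : ℕ) < k
  · have hsub : S.filter (fun w => (extGraph n k).Adj v w) ⊆
        (Finset.univ.filter fun w : Fin n => (w : ℕ) < k).erase v := by
      intro w hw
      obtain ⟨hwS, hadj⟩ := Finset.mem_filter.mp hw
      refine Finset.mem_erase.mpr ⟨fun h => hadj.1 h.symm,
        Finset.mem_filter.mpr ⟨Finset.mem_univ _, ?_⟩⟩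
      have hle : w ≤ v := S.le_max' w hwS
      exact lt_of_le_of_lt (Fin.le_def.mp hle) hvk
    calc (S.filter fun w => (extGraph n k).Adj v w).card
        ≤ ((Finset.univ.filter fun w : Fin n => (w : ℕ) < k).erase v).card :=
          Finset.card_le_card hsub
      _ ≤ (Finset.univ.filter fun w : Fin n => (w : ℕ) < k).card :=
          Finset.card_erase_le
      _ = k := cardA hkn
  · have hsub : S.filter (fun w => (extGraph n k).Adj v w) ⊆
        Finset.univ.filter fun w : Fin n => (w : ℕ) < k := by
      intro w hw
      obtain ⟨-, hadj⟩ := Finset.mem_filter.mp hw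
      exact Finset.mem_filter.mpr ⟨Finset.mem_univ _, hadj.2.resolve_left hvk⟩
    calc (S.filter fun w => (extGraph n k).Adj v w).card
        ≤ _ := Finset.card_le_card hsub
      _ = k := cardA hkn

private lemma extDegA {n k : ℕ} {v : Fin n} (hvk : (v : ℕ) < k) :
    (extGraph n k).degree v = n - 1 := by
  rw [← SimpleGraph.card_neighborFinset_eq_degree, SimpleGraph.neighborFinset_eq_filter]
  have : (Finset.univ.filter fun w : Fin n => (extGraph n k).Adj v w)
      = Finset.univ.erase v := by
    ext w
    simp only [Finset.mem_filter, Finset.mem_univ, true_and, Finset.mem_erase, and_true]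
    constructor
    · exact fun h => fun he => h.1 he.symm
    · exact fun h => ⟨fun he => h he.symm, Or.inl hvk⟩
  rw [this, Finset.card_erase_of_mem (Finset.mem_univ v), Finset.card_univ, Fintype.card_fin]

private lemma extDegB {n k : ℕ} {v : Fin n} (hkn : k ≤ n) (hvk : ¬ (v : ℕ) < k) :
    (extGraph n k).degree v = k := by
  rw [← SimpleGraph.card_neighborFinset_eq_degree, SimpleGraph.neighborFinset_eq_filter]
  have : (Finset.univ.filter fun w : Fin n => (extGraph n k).Adj v w)
      = Finset.univ.filter fun w : Fin n => (w : ℕ) < k := by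
    ext w
    simp only [Finset.mem_filter, Finset.mem_univ, true_and]
    constructor
    · exact fun h => h.2.resolve_left hvk
    · intro h
      refine ⟨fun he => hvk (he ▸ h), Or.inr h⟩
  rw [this, cardA hkn]

private lemma extEdges {n k : ℕ} (hk : 1 ≤ k) (hkn : k ≤ n) :
    ((extGraph n k).edgeSet).ncard = k * n - k * (k + 1) / 2 := by
  rw [← SimpleGraph.coe_edgeFinset, Set.ncard_coe_finset]
  have hsum : ∑ v, (extGraph n k).degree v = 2 * (extGraph n k).edgeFinset.card :=
    SimpleGraph.sum_degrees_eq_twice_card_edges _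
  rw [← Finset.sum_filter_add_sum_filter_not Finset.univ
    (fun v : Fin n => (v : ℕ) < k)] at hsum
  have h1 : ∑ v ∈ Finset.univ.filter (fun v : Fin n => (v : ℕ) < k),
      (extGraph n k).degree v = k * (n - 1) := by
    rw [Finset.sum_congr rfl (fun v hv => extDegA (Finset.mem_filter.mp hv).2),
      Finset.sum_const, cardA hkn, smul_eq_mul]
  have h2 : ∑ v ∈ Finset.univ.filter (fun v : Fin n => ¬ (v : ℕ) < k),
      (extGraph n k).degree v = (n - k) * k := by
    rw [Finset.sum_congr rfl (fun v hv => extDegB hkn (Finset.mem_filter.mp hv).2),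
      Finset.sum_const, cardB hkn, smul_eq_mul]
  rw [h1, h2] at hsum
  have e1 : k * (n - 1) + k = k * n := by
    rw [← Nat.mul_succ]; congr 1; omega
  have e2 : (n - k) * k + k * k = n * k := by
    rw [← Nat.add_mul]; congr 1; omega
  have e3 : k * (k + 1) = k * k + k := by ring
  have hmul : k * n = n * k := Nat.mul_comm k n
  have hm : ∃ m, k * k + k = m + m := by
    have := Nat.even_mul_succ_self k
    rw [Nat.mul_succ] at this
    exact this
  obtain ⟨m, hmm⟩ := hm
  rw [e3]
  set E := (extGraph n k).edgeFinset.card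
  generalize hP : k * n = P at hsum e1 hmul ⊢
  generalize hQ : n * k = Q at hsum e2 hmul
  generalize hR : k * k = R at hsum e2 hmm ⊢
  generalize hU : k * (n - 1) = U at hsum e1
  generalize hV : (n - k) * k = V at hsum e2
  omega

private lemma extClique {n k : ℕ} (s : Finset (Fin n)) :
    (extGraph n k).IsNClique 3 s ↔
      s.card = 3 ∧ (s.filter fun v : Fin n => ¬ (v : ℕ) < k).card ≤ 1 := by
  rw [SimpleGraph.isNClique_iff, SimpleGraph.isClique_iff]
  constructor
  · rintro ⟨hcl, hcard⟩
    refine ⟨hcard, ?_⟩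
    by_contra h
    obtain ⟨a, b, ha, hb, hab⟩ := Finset.one_lt_card_iff.mp (not_le.mp h)
    obtain ⟨haS, hak⟩ := Finset.mem_filter.mp ha
    obtain ⟨hbS, hbk⟩ := Finset.mem_filter.mp hb
    have := (hcl (Finset.mem_coe.mpr haS) (Finset.mem_coe.mpr hbS) hab).2
    tauto
  · rintro ⟨hcard, h1⟩
    refine ⟨?_, hcard⟩
    intro a ha b hb hab
    refine ⟨hab, ?_⟩
    by_contra hcon
    push_neg at hcon
    have ha' : a ∈ s.filter fun v : Fin n => ¬ (v : ℕ) < k :=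
      Finset.mem_filter.mpr ⟨Finset.mem_coe.mp ha, by omega⟩
    have hb' : b ∈ s.filter fun v : Fin n => ¬ (v : ℕ) < k :=
      Finset.mem_filter.mpr ⟨Finset.mem_coe.mp hb, by omega⟩
    have := Finset.one_lt_card_iff.mpr ⟨a, b, ha', hb', hab⟩
    omega

private lemma extTriangles {n k : ℕ} (hkn : k ≤ n) :
    triangleCount (extGraph n k) = k.choose 3 + k.choose 2 * (n - k) := by
  classical
  have hT : {s : Finset (Fin n) | (extGraph n k).IsNClique 3 s}
      = ↑(Finset.univ.filter fun s : Finset (Fin n) => (extGraph n k).IsNClique 3 s) := by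
    ext s; simp
  rw [triangleCount, hT, Set.ncard_coe_finset]
  have hfe : (Finset.univ.filter fun s : Finset (Fin n) => (extGraph n k).IsNClique 3 s)
      = (Finset.univ.filter fun s : Finset (Fin n) =>
          s.card = 3 ∧ (s.filter fun v : Fin n => ¬ (v : ℕ) < k).card = 0)
      ∪ (Finset.univ.filter fun s : Finset (Fin n) =>
          s.card = 3 ∧ (s.filter fun v : Fin n => ¬ (v : ℕ) < k).card = 1) := by
    ext s
    simp only [Finset.mem_filter, Finset.mem_univ, true_and, Finset.mem_union, extClique]
    omega
  rw [hfe, Finset.card_union_of_disjoint]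
  · -- cardinalities of the two parts
    have h0 : (Finset.univ.filter fun s : Finset (Fin n) =>
        s.card = 3 ∧ (s.filter fun v : Fin n => ¬ (v : ℕ) < k).card = 0)
        = (Finset.univ.filter fun v : Fin n => (v : ℕ) < k).powersetCard 3 := by
      ext s
      simp only [Finset.mem_filter, Finset.mem_univ, true_and,
        Finset.mem_powersetCard, Finset.card_eq_zero, Finset.filter_eq_empty_iff]
      constructor
      · rintro ⟨h3, hf⟩
        exact ⟨fun v hv => Finset.mem_filter.mpr ⟨Finset.mem_univ _, by
          have := hf hv; omega⟩, h3⟩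
      · rintro ⟨hsub, h3⟩
        exact ⟨h3, fun v hv => by
          have := (Finset.mem_filter.mp (hsub hv)).2; omega⟩
    have h1 : (Finset.univ.filter fun s : Finset (Fin n) =>
        s.card = 3 ∧ (s.filter fun v : Fin n => ¬ (v : ℕ) < k).card = 1).card
        = (((Finset.univ.filter fun v : Fin n => (v : ℕ) < k).powersetCard 2) ×ˢ
           ((Finset.univ.filter fun v : Fin n => ¬ (v : ℕ) < k).powersetCard 1)).card := by
      apply Finset.card_nbij'
        (i := fun s => (s.filter fun v : Fin n => (v : ℕ) < k, s.filter fun v : Fin n => ¬ (v : ℕ) < k))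
        (j := fun p => p.1 ∪ p.2)
      · intro s hs
        obtain ⟨h3, hf1⟩ := (Finset.mem_filter.mp hs).2
        have hsplit := Finset.card_filter_add_card_filter_not
          (s := s) (p := fun v : Fin n => (v : ℕ) < k)
        rw [Finset.mem_coe, Finset.mem_product]
        dsimp only
        constructor
        · rw [Finset.mem_powersetCard]
          refine ⟨fun v hv => ?_, by omega⟩
          obtain ⟨hvs, hvk⟩ := Finset.mem_filter.mp hv
          exact Finset.mem_filter.mpr ⟨Finset.mem_univ _, hvk⟩
        · rw [Finset.mem_powersetCard]
          refine ⟨fun v hv => ?_, hf1⟩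
          obtain ⟨hvs, hvk⟩ := Finset.mem_filter.mp hv
          exact Finset.mem_filter.mpr ⟨Finset.mem_univ _, hvk⟩
      · rintro ⟨p, q⟩ hpq
        rw [Finset.mem_coe, Finset.mem_product] at hpq
        obtain ⟨hp, hq⟩ := hpq
        rw [Finset.mem_powersetCard] at hp hq
        have hdisj : Disjoint p q := by
          rw [Finset.disjoint_left]
          intro a hap haq
          have h1 := (Finset.mem_filter.mp (hp.1 hap)).2
          have h2 := (Finset.mem_filter.mp (hq.1 haq)).2
          exact h2 h1
        have hqf : (p ∪ q).filter (fun v : Fin n => ¬ (v : ℕ) < k) = q := by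
          ext v
          simp only [Finset.mem_filter, Finset.mem_union]
          constructor
          · rintro ⟨hv | hv, hk'⟩
            · exact absurd (Finset.mem_filter.mp (hp.1 hv)).2 hk'
            · exact hv
          · intro hv
            exact ⟨Or.inr hv, (Finset.mem_filter.mp (hq.1 hv)).2⟩
        refine Finset.mem_filter.mpr ⟨Finset.mem_univ _, ?_, ?_⟩
        · rw [Finset.card_union_of_disjoint hdisj, hp.2, hq.2]
        · rw [hqf, hq.2]
      · intro s hs
        exact Finset.filter_union_filter_not_eq _ s
      · rintro ⟨p, q⟩ hpq
        rw [Finset.mem_coe, Finset.mem_product] at hpq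
        obtain ⟨hp, hq⟩ := hpq
        rw [Finset.mem_powersetCard] at hp hq
        have e1 : (p ∪ q).filter (fun v : Fin n => (v : ℕ) < k) = p := by
          ext v
          simp only [Finset.mem_filter, Finset.mem_union]
          constructor
          · rintro ⟨hv | hv, hk'⟩
            · exact hv
            · exact absurd hk' (Finset.mem_filter.mp (hq.1 hv)).2
          · intro hv
            exact ⟨Or.inl hv, (Finset.mem_filter.mp (hp.1 hv)).2⟩
        have e2 : (p ∪ q).filter (fun v : Fin n => ¬ (v : ℕ) < k) = q := by
          ext v
          simp only [Finset.mem_filter, Finset.mem_union]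
          constructor
          · rintro ⟨hv | hv, hk'⟩
            · exact absurd (Finset.mem_filter.mp (hp.1 hv)).2 hk'
            · exact hv
          · intro hv
            exact ⟨Or.inr hv, (Finset.mem_filter.mp (hq.1 hv)).2⟩
        dsimp only
        rw [e1, e2]
    rw [h0, h1, Finset.card_powersetCard, Finset.card_product,
      Finset.card_powersetCard, Finset.card_powersetCard, cardA hkn, cardB hkn,
      Nat.choose_one_right]
  · rw [Finset.disjoint_left]
    intro s h0 h1
    have := (Finset.mem_filter.mp h0).2
    have := (Finset.mem_filter.mp h1).2
    omega

/-- The bounds of Proposition 2 are attained: for `1 ≤ k ≤ n` there is a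
`k`-degenerate graph on `n` vertices with exactly `k·n − k(k+1)/2` edges and exactly
`C(k,3) + C(k,2)·(n−k)` triangles. -/
theorem exists_extremal_kDegenerate {n k : ℕ} (hk : 1 ≤ k) (hkn : k ≤ n) :
    ∃ G : SimpleGraph (Fin n), IsKDegenerate k G ∧
      G.edgeSet.ncard = k * n - k * (k + 1) / 2 ∧
      triangleCount G = k.choose 3 + k.choose 2 * (n - k) := by
  exact ⟨extGraph n k, extDegen hkn, extEdges hk hkn, extTriangles hkn⟩
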